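/- Let M(z) be the 3×3 matrix over ℝ[z] with rows (0,2,8), (12z,12z,0), (4z^2,2z,8z), and let Γ_n(z) be defined by Γ_0=2+2z, Γ_1=40z+24z^2, Γ_2=48z+720z^2+256z^3 and the recurrence Γ_n = 20zΓ_{n-1} + 8z(3-8z)Γ_{n-2} - 384z^3Γ_{n-3} for n≥3. Then for all n ≥ 0, the sum of the entries of the third column of M(z)^{n+1} equals 4·Γ_n(z). -/
import Mathlib
set_option maxHeartbeats 1000000


open Polynomial Matrix

theorem stmt18 (M : Matrix (Fin 3) (Fin 3) (Polynomial ℝ))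
    (hM : M = !![0, 2, 8; 12 * X, 12 * X, 0; 4 * X ^ 2, 2 * X, 8 * X])
    (Γ : ℕ → Polynomial ℝ)
    (h0 : Γ 0 = 2 + 2 * X) (h1 : Γ 1 = 40 * X + 24 * X ^ 2)
    (h2 : Γ 2 = 48 * X + 720 * X ^ 2 + 256 * X ^ 3)
    (hrec : ∀ n, Γ (n + 3) =
      20 * X * Γ (n + 2) + 8 * X * (3 - 8 * X) * Γ (n + 1) - 384 * X ^ 3 * Γ n) :
    ∀ n, ∑ i : Fin 3, (M ^ (n + 1)) i 2 = 4 * Γ n := by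
  have hCH : M ^ 3 = ((20 * X : Polynomial ℝ)) • M ^ 2 + ((8 * X * (3 - 8 * X) : Polynomial ℝ)) • M
      - ((384 * X ^ 3 : Polynomial ℝ)) • (1 : Matrix (Fin 3) (Fin 3) (Polynomial ℝ)) := by
    subst hM
    rw [pow_succ, pow_two]
    refine Matrix.ext fun i j => ?_
    fin_cases i <;> fin_cases j <;>
      simp [Matrix.mul_apply, Fin.sum_univ_three, Matrix.one_apply] <;> ring
  have hpow : ∀ n, M ^ (n + 4) = ((20 * X : Polynomial ℝ)) • M ^ (n + 3)
      + ((8 * X * (3 - 8 * X) : Polynomial ℝ)) • M ^ (n + 2) - ((384 * X ^ 3 : Polynomial ℝ)) • M ^ (n + 1) := by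
    intro n
    have h4 : M ^ (n + 4) = M ^ (n + 1) * M ^ 3 := pow_add M (n+1) 3
    rw [h4, hCH, mul_sub, mul_add, mul_smul_comm, mul_smul_comm, mul_smul_comm,
      mul_one, show M ^ (n+1) * M ^ 2 = M ^ (n+3) from (pow_add M (n+1) 2).symm,
      show M ^ (n+1) * M = M ^ (n+2) from (pow_succ M (n+1)).symm]
  intro n
  induction n using Nat.strong_induction_on with
  | _ n ih =>
    match n with
    | 0 =>
      subst hM
      rw [h0]
      simp [Matrix.mul_apply, Fin.sum_univ_three]
      ring
    | 1 =>
      subst hM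
      rw [h1, show (1:ℕ)+1=2 from rfl, pow_two]
      simp [Matrix.mul_apply, Fin.sum_univ_three]
      ring
    | 2 =>
      subst hM
      rw [h2, show (2:ℕ)+1=3 from rfl, pow_succ, pow_two]
      simp [Matrix.mul_apply, Fin.sum_univ_three]
      ring
    | (k + 3) =>
      have e0 := ih k (by omega)
      have e1 := ih (k + 1) (by omega)
      have e2 := ih (k + 2) (by omega)
      have : k + 3 + 1 = k + 4 := rfl
      rw [this, hpow k, hrec]
      simp only [Matrix.sub_apply, Matrix.add_apply, Matrix.smul_apply, smul_eq_mul,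
        Finset.sum_add_distrib, Finset.sum_sub_distrib, ← Finset.mul_sum]
      rw [e0, e1, e2]
      ring
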